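/- Let Γ be a finite graph whose vertex set is partitioned as C1 ∪ C2 ∪ D with |C1| = |C2|, such that the induced subgraphs on C1, C2 and C1 ∪ C2 are regular with the degrees on C1 and C2 equal, and such that every x ∈ D satisfies either |N(x) ∩ C1| = |N(x) ∩ C2| or N(x) ∩ (C1 ∪ C2) ∈ {C1, C2}. Let Γ' be obtained from Γ by swapping, for each x ∈ D with N(x) ∩ (C1 ∪ C2) = C1 (resp. C2), its neighbourhood in C1 ∪ C2 to C2 (resp. C1), leaving all other adjacencies unchanged. Then Γ' is cospectral with Γ (the adjacency matrices of Γ and Γ' have the same characteristic polynomial). -/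

import Mathlib

open Matrix Polynomial

section Aux
set_option linter.unusedSectionVars false
variable {n R : Type*} [Fintype n] [CommRing R]

private lemma myVecMulVec_mul_mat (a b : n → R) (A : Matrix n n R) :
    vecMulVec a b * A = vecMulVec a (b ᵥ* A) := by
  ext i j
  simp only [mul_apply, vecMulVec_apply, vecMul, dotProduct, Finset.mul_sum]
  exact Finset.sum_congr rfl fun k _ => by ring

private lemma myMat_mul_vecMulVec (A : Matrix n n R) (a b : n → R) :
    A * vecMulVec a b = vecMulVec (A *ᵥ a) b := by
  ext i j
  simp only [mul_apply, vecMulVec_apply, mulVec, dotProduct, Finset.sum_mul]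
  exact Finset.sum_congr rfl fun k _ => by ring

private lemma myVecMulVec_mul_vecMulVec (a b c d : n → R) :
    vecMulVec a b * vecMulVec c d = (∑ k, b k * c k) • vecMulVec a d := by
  ext i j
  simp only [mul_apply, vecMulVec_apply, Matrix.smul_apply, smul_eq_mul]
  rw [Finset.sum_mul]
  exact Finset.sum_congr rfl fun k _ => by ring

private lemma myVecMulVec_add_right (a b c : n → R) :
    vecMulVec a (b + c) = vecMulVec a b + vecMulVec a c := by
  ext i j; simp [vecMulVec_apply, mul_add]

private lemma myVecMulVec_add_left (a b c : n → R) :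
    vecMulVec (a + b) c = vecMulVec a c + vecMulVec b c := by
  ext i j; simp [vecMulVec_apply, add_mul]

private lemma myVecMulVec_smul_right (r : R) (a b : n → R) :
    vecMulVec a (r • b) = r • vecMulVec a b := by
  ext i j; simp [vecMulVec_apply]; ring

private lemma myVecMulVec_smul_left (r : R) (a b : n → R) :
    vecMulVec (r • a) b = r • vecMulVec a b := by
  ext i j; simp [vecMulVec_apply]; ring

private lemma myCharpoly_conj [DecidableEq n] (Q A : Matrix n n R) (hQ : Q * Q = 1) :
    (Q * A * Q).charpoly = A.charpoly := by
  set Qc : Matrix n n R[X] := (C : R →+* R[X]).mapMatrix Q with hQc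
  have hQc1 : Qc * Qc = 1 := by rw [hQc, ← _root_.map_mul, hQ, _root_.map_one]
  have hcomm : scalar n (X : R[X]) * Qc = Qc * scalar n (X : R[X]) :=
    (scalar_commute (X : R[X]) (fun r => Commute.all _ _) Qc).eq
  have key : Qc * charmatrix A * Qc = charmatrix (Q * A * Q) := by
    rw [charmatrix, charmatrix, mul_sub, sub_mul, _root_.map_mul, _root_.map_mul]
    congr 1
    rw [← hcomm, mul_assoc, hQc1, mul_one]
  unfold Matrix.charpoly
  rw [← key, det_mul, det_mul]
  have hdet : Qc.det * Qc.det = 1 := by rw [← det_mul, hQc1, det_one]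
  calc Qc.det * (charmatrix A).det * Qc.det
      = (charmatrix A).det * (Qc.det * Qc.det) := by ring
    _ = (charmatrix A).det := by rw [hdet, mul_one]

end Aux

set_option maxHeartbeats 1000000 in
open scoped Classical in
/-- Wang–Qiu–Hu switching: switching the edges between `C1 ∪ C2` and `D`
produces a cospectral graph. -/
theorem stmt6 {V : Type*} [Fintype V] [DecidableEq V] (G : SimpleGraph V)
    (C1 C2 D : Set V)
    (hd12 : Disjoint C1 C2) (hd1D : Disjoint C1 D) (hd2D : Disjoint C2 D)
    (hcover : C1 ∪ C2 ∪ D = Set.univ)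
    (hcard : C1.ncard = C2.ncard)
    -- the induced subgraphs on `C1` and `C2` are regular with the same degree
    (hreg12 : ∃ d, (∀ x ∈ C1, (G.neighborSet x ∩ C1).ncard = d) ∧
                   (∀ x ∈ C2, (G.neighborSet x ∩ C2).ncard = d))
    -- the induced subgraph on `C1 ∪ C2` is regular
    (hregU : ∃ e, ∀ x ∈ C1 ∪ C2, (G.neighborSet x ∩ (C1 ∪ C2)).ncard = e)
    -- every vertex of `D` has equally many neighbours in `C1` and `C2`,
    -- or its neighbourhood in `C1 ∪ C2` is exactly `C1` or exactly `C2`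
    (hD : ∀ x ∈ D, (G.neighborSet x ∩ C1).ncard = (G.neighborSet x ∩ C2).ncard ∨
      G.neighborSet x ∩ (C1 ∪ C2) = C1 ∨ G.neighborSet x ∩ (C1 ∪ C2) = C2)
    -- `G'` is the switched graph
    (G' : SimpleGraph V)
    (hG' : ∀ x y, G'.Adj x y ↔
      ((x ∈ D ∧ y ∈ C1 ∪ C2 ∧
          ((G.neighborSet x ∩ (C1 ∪ C2) = C1 ∧ y ∈ C2) ∨
           (G.neighborSet x ∩ (C1 ∪ C2) = C2 ∧ y ∈ C1) ∨
           (G.neighborSet x ∩ (C1 ∪ C2) ≠ C1 ∧ G.neighborSet x ∩ (C1 ∪ C2) ≠ C2 ∧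
             G.Adj x y))) ∨
       (y ∈ D ∧ x ∈ C1 ∪ C2 ∧
          ((G.neighborSet y ∩ (C1 ∪ C2) = C1 ∧ x ∈ C2) ∨
           (G.neighborSet y ∩ (C1 ∪ C2) = C2 ∧ x ∈ C1) ∨
           (G.neighborSet y ∩ (C1 ∪ C2) ≠ C1 ∧ G.neighborSet y ∩ (C1 ∪ C2) ≠ C2 ∧
             G.Adj x y))) ∨
       (¬(x ∈ D ∧ y ∈ C1 ∪ C2) ∧ ¬(y ∈ D ∧ x ∈ C1 ∪ C2) ∧ G.Adj x y))) :
    (G.adjMatrix ℤ).charpoly = (G'.adjMatrix ℤ).charpoly := by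
  classical
  -- trivial case: C1 (hence C2) empty
  by_cases hC1e : C1 = ∅
  · have hC2e : C2 = ∅ := by
      rw [hC1e, Set.ncard_empty] at hcard
      exact (Set.ncard_eq_zero (Set.toFinite _)).mp hcard.symm
    have hGG : G' = G := by
      ext x y
      rw [hG']
      simp only [hC1e, hC2e, Set.union_empty, Set.empty_union, Set.mem_empty_iff_false]
      tauto
    rw [hGG]
  -- main case
  have hC1ne : C1.Nonempty := Set.nonempty_iff_ne_empty.mpr hC1e
  obtain ⟨d, hd1, hd2⟩ := hreg12
  obtain ⟨e, he⟩ := hregU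
  set m : ℕ := C1.ncard with hm
  have hmpos : 0 < m := (Set.ncard_pos (Set.toFinite _)).mpr hC1ne
  have hm0 : (m : ℚ) ≠ 0 := by exact_mod_cast hmpos.ne'
  have hC12ne : C1 ≠ C2 := by
    intro hEq
    rw [hEq] at hd12
    rw [disjoint_self] at hd12
    exact hC1ne.ne_empty (hEq.trans hd12)
  have hD_nC : ∀ z ∈ D, z ∉ C1 ∪ C2 := by
    rintro z hz (h1 | h2)
    exacts [Set.disjoint_left.mp hd1D h1 hz, Set.disjoint_left.mp hd2D h2 hz]
  have hC_nD : ∀ z, z ∉ D → z ∈ C1 ∪ C2 := by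
    intro z hz
    have hzu : z ∈ C1 ∪ C2 ∪ D := by rw [hcover]; exact Set.mem_univ z
    rcases hzu with h | h
    · exact h
    · exact absurd h hz
  set s : V → ℚ := fun x => if x ∈ C1 then 1 else if x ∈ C2 then -1 else 0 with hs
  set h : V → ℚ := fun x =>
      if x ∈ D ∧ G.neighborSet x ∩ (C1 ∪ C2) = C1 then (m : ℚ)
      else if x ∈ D ∧ G.neighborSet x ∩ (C1 ∪ C2) = C2 then -(m : ℚ) else 0 with hh
  set c : ℚ := 2 * (d : ℚ) - (e : ℚ) with hc
  set A : Matrix V V ℚ := G.adjMatrix ℚ with hA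
  set A' : Matrix V V ℚ := G'.adjMatrix ℚ with hA'
  have hsD : ∀ z ∈ D, s z = 0 := by
    intro z hz
    have hz1 : z ∉ C1 := fun hc1 => hD_nC z hz (Or.inl hc1)
    have hz2 : z ∉ C2 := fun hc2 => hD_nC z hz (Or.inr hc2)
    simp only [hs]
    rw [if_neg hz1, if_neg hz2]
  have hhD : ∀ z, z ∉ D → h z = 0 := by
    intro z hz
    simp only [hh]
    rw [if_neg (fun q => hz q.1), if_neg (fun q => hz q.1)]
  have key0 : ∀ S : Set V, ((S.ncard : ℚ)) = ∑ k, if k ∈ S then (1 : ℚ) else 0 := by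
    intro S
    rw [Set.ncard_eq_toFinset_card' S, Finset.sum_boole]
    norm_cast
    congr 1
    ext k; simp
  -- entrywise value of A *ᵥ s
  have hfval : ∀ x, (A *ᵥ s) x =
      ((G.neighborSet x ∩ C1).ncard : ℚ) - ((G.neighborSet x ∩ C2).ncard : ℚ) := by
    intro x
    rw [key0, key0, ← Finset.sum_sub_distrib]
    show ∑ k, A x k * s k = _
    apply Finset.sum_congr rfl
    intro k _
    simp only [hA, SimpleGraph.adjMatrix_apply, hs, Set.mem_inter_iff,
      SimpleGraph.mem_neighborSet]
    by_cases h1 : G.Adj x k <;> by_cases h2 : k ∈ C1 <;> by_cases h3 : k ∈ C2 <;>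
      first
        | (exact absurd h3 (Set.disjoint_left.mp hd12 h2))
        | simp [h1, h2, h3]
  have hsplit : ∀ x, ((G.neighborSet x ∩ (C1 ∪ C2)).ncard : ℚ) =
      ((G.neighborSet x ∩ C1).ncard : ℚ) + ((G.neighborSet x ∩ C2).ncard : ℚ) := by
    intro x
    rw [Set.inter_union_distrib_left,
      Set.ncard_union_eq (hd12.mono Set.inter_subset_right Set.inter_subset_right)
        (Set.toFinite _) (Set.toFinite _)]
    push_cast; ring
  -- the key eigen-equation
  have hAs : A *ᵥ s = c • s + h := by
    funext x
    rw [hfval x]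
    simp only [Pi.add_apply, Pi.smul_apply, smul_eq_mul]
    by_cases hx1 : x ∈ C1
    · have hx2 : x ∉ C2 := Set.disjoint_left.mp hd12 hx1
      have hxD : x ∉ D := Set.disjoint_left.mp hd1D hx1
      have hsx : s x = 1 := by simp only [hs]; rw [if_pos hx1]
      rw [hhD x hxD, hsx]
      have hq := hsplit x
      rw [he x (Or.inl hx1), hd1 x hx1] at hq
      rw [hd1 x hx1, hc]
      push_cast at hq ⊢
      linarith
    · by_cases hx2 : x ∈ C2
      · have hxD : x ∉ D := Set.disjoint_left.mp hd2D hx2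
        have hsx : s x = -1 := by simp only [hs]; rw [if_neg hx1, if_pos hx2]
        rw [hhD x hxD, hsx]
        have hq := hsplit x
        rw [he x (Or.inr hx2), hd2 x hx2] at hq
        rw [hd2 x hx2, hc]
        push_cast at hq ⊢
        linarith
      · have hxD : x ∈ D := by
          by_contra hxD
          rcases hC_nD x hxD with h1 | h2
          exacts [hx1 h1, hx2 h2]
        rw [hsD x hxD, mul_zero, zero_add]
        by_cases e1 : G.neighborSet x ∩ (C1 ∪ C2) = C1
        · have hn1 : G.neighborSet x ∩ C1 = C1 := by
            apply Set.eq_of_subset_of_subset Set.inter_subset_right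
            intro k hk
            have hk2 : k ∈ G.neighborSet x ∩ (C1 ∪ C2) := by rw [e1]; exact hk
            exact ⟨hk2.1, hk⟩
          have hn2 : G.neighborSet x ∩ C2 = ∅ := by
            ext k
            simp only [Set.mem_inter_iff, Set.mem_empty_iff_false, iff_false, not_and]
            intro hn hk2
            have hk1 : k ∈ C1 := by
              have : k ∈ G.neighborSet x ∩ (C1 ∪ C2) := ⟨hn, Or.inr hk2⟩
              rwa [e1] at this
            exact Set.disjoint_left.mp hd12 hk1 hk2
          have hhx : h x = (m : ℚ) := by simp only [hh]; rw [if_pos ⟨hxD, e1⟩]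
          rw [hn1, hn2, hhx, Set.ncard_empty, ← hm]
          push_cast; ring
        · by_cases e2 : G.neighborSet x ∩ (C1 ∪ C2) = C2
          · have hn2 : G.neighborSet x ∩ C2 = C2 := by
              apply Set.eq_of_subset_of_subset Set.inter_subset_right
              intro k hk
              have hk2 : k ∈ G.neighborSet x ∩ (C1 ∪ C2) := by rw [e2]; exact hk
              exact ⟨hk2.1, hk⟩
            have hn1 : G.neighborSet x ∩ C1 = ∅ := by
              ext k
              simp only [Set.mem_inter_iff, Set.mem_empty_iff_false, iff_false, not_and]
              intro hn hk1
              have hk2 : k ∈ C2 := by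
                have : k ∈ G.neighborSet x ∩ (C1 ∪ C2) := ⟨hn, Or.inl hk1⟩
                rwa [e2] at this
              exact Set.disjoint_left.mp hd12 hk1 hk2
            have hhx : h x = -(m : ℚ) := by
              simp only [hh]
              rw [if_neg (fun q => e1 q.2), if_pos ⟨hxD, e2⟩]
            have hm2 : C2.ncard = m := hcard.symm
            rw [hn1, hn2, hhx, Set.ncard_empty, hm2]
            push_cast; ring
          · have hhx : h x = 0 := by
              simp only [hh]
              rw [if_neg (fun q => e1 q.2), if_neg (fun q => e2 q.2)]
            rcases hD x hxD with heq | h1 | h2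
            · rw [heq, hhx]; ring
            · exact absurd h1 e1
            · exact absurd h2 e2
  -- sums
  have hsum2 : ∑ k, s k * s k = 2 * (m : ℚ) := by
    have h1 : ∑ k, s k * s k = (((C1 ∪ C2).ncard : ℚ)) := by
      rw [key0]
      apply Finset.sum_congr rfl
      intro k _
      simp only [hs, Set.mem_union]
      by_cases h2 : k ∈ C1 <;> by_cases h3 : k ∈ C2 <;> simp [h2, h3]
    rw [h1, Set.ncard_union_eq hd12 (Set.toFinite _) (Set.toFinite _)]
    have h2 : C2.ncard = m := hcard.symm
    have h3 : C1.ncard = m := hm.symm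
    rw [h2, h3]
    push_cast; ring
  have hsumhs : ∑ k, h k * s k = 0 := by
    apply Finset.sum_eq_zero
    intro k _
    by_cases hk : k ∈ D
    · rw [hsD k hk, mul_zero]
    · rw [hhD k hk, zero_mul]
  -- the switching matrix
  set N : Matrix V V ℚ := vecMulVec s s with hN
  set Q : Matrix V V ℚ := 1 - (m : ℚ)⁻¹ • N with hQ
  have hvu : s ᵥ* A = c • s + h := by
    have : s ᵥ* A = Aᵀ *ᵥ s := (mulVec_transpose A s).symm
    rw [this, hA, SimpleGraph.transpose_adjMatrix, ← hA, hAs]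
  have hNA : N * A = c • N + vecMulVec s h := by
    rw [hN, myVecMulVec_mul_mat, hvu, myVecMulVec_add_right, myVecMulVec_smul_right]
  have hAN : A * N = c • N + vecMulVec h s := by
    rw [hN, myMat_mul_vecMulVec, hAs, myVecMulVec_add_left, myVecMulVec_smul_left]
  have hNN : N * N = (2 * (m : ℚ)) • N := by
    rw [hN, myVecMulVec_mul_vecMulVec, hsum2]
  have hWN : vecMulVec s h * N = (0 : Matrix V V ℚ) := by
    rw [hN, myVecMulVec_mul_vecMulVec, hsumhs, zero_smul]
  have hQQ : Q * Q = 1 := by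
    rw [hQ]
    simp only [sub_mul, mul_sub, add_mul, mul_add, one_mul, mul_one, smul_mul_assoc,
      mul_smul_comm, hNN, smul_add, smul_sub, smul_zero, smul_smul]
    match_scalars <;> field_simp [hm0] <;> ring_nf
  have hQAQ : Q * A * Q = A - (m : ℚ)⁻¹ • (vecMulVec s h + vecMulVec h s) := by
    rw [hQ]
    simp only [sub_mul, mul_sub, add_mul, mul_add, one_mul, mul_one, smul_mul_assoc,
      mul_smul_comm, hNA, hAN, hNN, hWN, smul_add, smul_sub, smul_zero, add_zero,
      zero_add, smul_smul]
    match_scalars <;> field_simp [hm0] <;> ring_nf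
  -- the switched adjacency matrix
  have hsymmA : ∀ (H : SimpleGraph V) (x y : V),
      (H.adjMatrix ℚ) x y = (H.adjMatrix ℚ) y x := by
    intro H x y
    simp only [SimpleGraph.adjMatrix_apply]
    exact if_congr (H.adj_comm x y) rfl rfl
  have hEpt : ∀ x y, A' x y = A x y - (m : ℚ)⁻¹ * (s x * h y + h x * s y) := by
    have main : ∀ x y, x ∈ D → A' x y = A x y - (m : ℚ)⁻¹ * (s x * h y + h x * s y) := by
      intro x y hx
      rw [hsD x hx]
      by_cases hy : y ∈ D
      · rw [hsD y hy]
        have hxU := hD_nC x hx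
        have hyU := hD_nC y hy
        have hiff : G'.Adj x y ↔ G.Adj x y := by rw [hG']; tauto
        simp only [hA', hA, SimpleGraph.adjMatrix_apply, hiff, mul_zero, zero_mul,
          add_zero, sub_zero]
      · have hyU := hC_nD y hy
        rw [hhD y hy, mul_zero, zero_add]
        by_cases e1 : G.neighborSet x ∩ (C1 ∪ C2) = C1
        · have hne2 : G.neighborSet x ∩ (C1 ∪ C2) ≠ C2 := by rw [e1]; exact hC12ne
          have hhx : h x = (m : ℚ) := by simp only [hh]; rw [if_pos ⟨hx, e1⟩]
          have hAdj' : G'.Adj x y ↔ y ∈ C2 := by rw [hG']; tauto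
          have hAdj : G.Adj x y ↔ y ∈ C1 := by
            constructor
            · intro ha
              have : y ∈ G.neighborSet x ∩ (C1 ∪ C2) := ⟨ha, hyU⟩
              rwa [e1] at this
            · intro h1
              have : y ∈ G.neighborSet x ∩ (C1 ∪ C2) := by rw [e1]; exact h1
              exact this.1
          rw [hhx]
          rcases hyU with h1 | h2
          · have h2 : y ∉ C2 := Set.disjoint_left.mp hd12 h1
            have hs1 : s y = 1 := by simp only [hs]; rw [if_pos h1]
            simp only [hA', hA, SimpleGraph.adjMatrix_apply]
            rw [if_neg (fun q => h2 (hAdj'.mp q)), if_pos (hAdj.mpr h1), hs1]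
            field_simp
            norm_num
          · have h1 : y ∉ C1 := Set.disjoint_right.mp hd12 h2
            have hs1 : s y = -1 := by simp only [hs]; rw [if_neg h1, if_pos h2]
            simp only [hA', hA, SimpleGraph.adjMatrix_apply]
            rw [if_pos (hAdj'.mpr h2), if_neg (fun q => h1 (hAdj.mp q)), hs1]
            field_simp
            norm_num
        · by_cases e2 : G.neighborSet x ∩ (C1 ∪ C2) = C2
          · have hhx : h x = -(m : ℚ) := by
              simp only [hh]
              rw [if_neg (fun q => e1 q.2), if_pos ⟨hx, e2⟩]
            have hAdj' : G'.Adj x y ↔ y ∈ C1 := by rw [hG']; tauto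
            have hAdj : G.Adj x y ↔ y ∈ C2 := by
              constructor
              · intro ha
                have : y ∈ G.neighborSet x ∩ (C1 ∪ C2) := ⟨ha, hyU⟩
                rwa [e2] at this
              · intro h2
                have : y ∈ G.neighborSet x ∩ (C1 ∪ C2) := by rw [e2]; exact h2
                exact this.1
            rw [hhx]
            rcases hyU with h1 | h2
            · have h2 : y ∉ C2 := Set.disjoint_left.mp hd12 h1
              have hs1 : s y = 1 := by simp only [hs]; rw [if_pos h1]
              simp only [hA', hA, SimpleGraph.adjMatrix_apply]
              rw [if_pos (hAdj'.mpr h1), if_neg (fun q => h2 (hAdj.mp q)), hs1]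
              field_simp
              norm_num
            · have h1 : y ∉ C1 := Set.disjoint_right.mp hd12 h2
              have hs1 : s y = -1 := by simp only [hs]; rw [if_neg h1, if_pos h2]
              simp only [hA', hA, SimpleGraph.adjMatrix_apply]
              rw [if_neg (fun q => h1 (hAdj'.mp q)), if_pos (hAdj.mpr h2), hs1]
              field_simp
              norm_num
          · have hhx : h x = 0 := by
              simp only [hh]
              rw [if_neg (fun q => e1 q.2), if_neg (fun q => e2 q.2)]
            have hiff : G'.Adj x y ↔ G.Adj x y := by rw [hG']; tauto
            simp only [hA', hA, SimpleGraph.adjMatrix_apply, hiff, hhx, mul_zero,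
              zero_mul, add_zero, sub_zero]
    intro x y
    by_cases hx : x ∈ D
    · exact main x y hx
    · by_cases hy : y ∈ D
      · calc A' x y = A' y x := hsymmA G' x y
          _ = A y x - (m : ℚ)⁻¹ * (s y * h x + h y * s x) := main y x hy
          _ = A x y - (m : ℚ)⁻¹ * (s x * h y + h x * s y) := by
              rw [hA, hsymmA G y x]; ring_nf
      · have hxU := hC_nD x hx
        have hyU := hC_nD y hy
        have hiff : G'.Adj x y ↔ G.Adj x y := by rw [hG']; tauto
        rw [hhD x hx, hhD y hy]
        simp only [hA', hA, SimpleGraph.adjMatrix_apply, hiff, mul_zero, zero_mul,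
          add_zero, sub_zero]
  have hEmat : A' = A - (m : ℚ)⁻¹ • (vecMulVec s h + vecMulVec h s) := by
    ext x y
    rw [hEpt x y]
    simp only [Matrix.sub_apply, Matrix.smul_apply, Matrix.add_apply, vecMulVec_apply,
      smul_eq_mul]
  have hconj : A' = Q * A * Q := by rw [hQAQ, hEmat]
  have hchar : A'.charpoly = A.charpoly := by rw [hconj]; exact myCharpoly_conj Q A hQQ
  have hmapG : (G.adjMatrix ℤ).map (Int.castRingHom ℚ) = A := by
    ext x y
    simp [hA, Matrix.map_apply, SimpleGraph.adjMatrix_apply, apply_ite]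
  have hmapG' : (G'.adjMatrix ℤ).map (Int.castRingHom ℚ) = A' := by
    ext x y
    simp [hA', Matrix.map_apply, SimpleGraph.adjMatrix_apply, apply_ite]
  apply Polynomial.map_injective (Int.castRingHom ℚ) Int.cast_injective
  rw [← Matrix.charpoly_map, ← Matrix.charpoly_map, hmapG, hmapG', hchar]
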